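/- arXiv:1006.0684 — 7 statements merged into one kernel-verified Lean document; each statement's English description precedes it below -/
import Mathlib

section
/- Let G₁,...,G_s : ℝ^s → ℝ be sup-contractive with common contraction constant α < 1. Define F₁(y) = G₁(y_s, y_{s-1}, ..., y₁) and inductively F_k(y) = G_k(F_{k-1}(y),...,F₁(y), y_s, y_{s-1},..., y_k) for 2 ≤ k ≤ s. Then the map F(y) = (F₁(y),...,F_s(y)) is a contraction on ℝ^s with respect to the sup norm. -/
/-- The recursively-defined components `F_k` (0-indexed: `Fcomp s G k` is `F_{k+1}`):
`F_1(y) = G_1(y_s, ..., y_1)` and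
`F_k(y) = G_k(F_{k-1}(y), ..., F_1(y), y_s, y_{s-1}, ..., y_k)`. -/
noncomputable def Fcomp (s : ℕ) (G : Fin s → (Fin s → ℝ) → ℝ) (k : ℕ) (y : Fin s → ℝ) : ℝ :=
  if h : k < s then
    G ⟨k, h⟩ (fun j => if hj : (j : ℕ) < k then Fcomp s G (k - 1 - (j : ℕ)) y
      else y ⟨s - 1 - ((j : ℕ) - k), by omega⟩)
  else 0
termination_by k
decreasing_by omega

lemma Fcomp_key (s : ℕ) (α : ℝ) (hα : α < 1)
    (G : Fin s → (Fin s → ℝ) → ℝ)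
    (hG : ∀ i (x y : Fin s → ℝ), |G i x - G i y| ≤ α * ‖x - y‖) :
    ∀ k, ∀ y z : Fin s → ℝ,
      |Fcomp s G k y - Fcomp s G k z| ≤ (max α 0) * ‖y - z‖ := by
  intro k
  induction k using Nat.strong_induction_on with
  | _ k ih =>
    intro y z
    by_cases h : k < s
    · rw [Fcomp, Fcomp, dif_pos h, dif_pos h]
      set u : Fin s → ℝ := fun j => if hj : (j : ℕ) < k then Fcomp s G (k - 1 - (j : ℕ)) y
        else y ⟨s - 1 - ((j : ℕ) - k), by omega⟩ with hu
      set v : Fin s → ℝ := fun j => if hj : (j : ℕ) < k then Fcomp s G (k - 1 - (j : ℕ)) z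
        else z ⟨s - 1 - ((j : ℕ) - k), by omega⟩ with hv
      have hnn : (0:ℝ) ≤ ‖y - z‖ := norm_nonneg _
      have huv : ‖u - v‖ ≤ ‖y - z‖ := by
        apply pi_norm_le_iff_of_nonneg hnn |>.2
        intro j
        simp only [Pi.sub_apply, Real.norm_eq_abs, hu, hv]
        by_cases hj : (j : ℕ) < k
        · rw [dif_pos hj, dif_pos hj]
          calc |Fcomp s G (k - 1 - (j : ℕ)) y - Fcomp s G (k - 1 - (j : ℕ)) z|
              ≤ (max α 0) * ‖y - z‖ := ih _ (by omega) y z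
            _ ≤ 1 * ‖y - z‖ := by
                apply mul_le_mul_of_nonneg_right _ hnn
                exact max_le hα.le one_pos.le
            _ = ‖y - z‖ := one_mul _
        · rw [dif_neg hj, dif_neg hj]
          have := norm_le_pi_norm (y - z) ⟨s - 1 - ((j : ℕ) - k), by omega⟩
          simpa using this
      calc |G ⟨k, h⟩ u - G ⟨k, h⟩ v| ≤ α * ‖u - v‖ := hG _ u v
        _ ≤ (max α 0) * ‖u - v‖ :=
            mul_le_mul_of_nonneg_right (le_max_left _ _) (norm_nonneg _)
        _ ≤ (max α 0) * ‖y - z‖ :=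
            mul_le_mul_of_nonneg_left huv (le_max_right _ _)
    · rw [Fcomp, Fcomp, dif_neg h, dif_neg h]
      simp [mul_nonneg (le_max_right α 0) (norm_nonneg (y - z))]

theorem Fcomp_contraction (s : ℕ) (hs : 1 ≤ s) (α : ℝ) (hα : α < 1)
    (G : Fin s → (Fin s → ℝ) → ℝ)
    (hG : ∀ i (x y : Fin s → ℝ), |G i x - G i y| ≤ α * ‖x - y‖) :
    ∃ C : ℝ, C < 1 ∧ ∀ y z : Fin s → ℝ,
      ‖(fun k : Fin s => Fcomp s G k y) - (fun k : Fin s => Fcomp s G k z)‖ ≤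
        C * ‖y - z‖ := by
  refine ⟨max α 0, max_lt hα one_pos, fun y z => ?_⟩
  have hnn : (0:ℝ) ≤ max α 0 * ‖y - z‖ :=
    mul_nonneg (le_max_right _ _) (norm_nonneg _)
  apply pi_norm_le_iff_of_nonneg hnn |>.2
  intro k
  simpa using Fcomp_key s α hα G hG k y z
end

section
/- Let G_n : ℝ^M → ℝ be sup-contractive for each n, with G_{n+P} = G_n for all n. Then for any initial condition (x₁,...,x_M), the sequence defined by x_n = G_n(x_{n-1},...,x_{n-M}) for n > M converges to a unique asymptotically periodic orbit of period P·M, independent of the initial condition. That is, there exists a sequence (x*_n) with x*_{n+PM} = x*_n such that |x_n - x*_n| → 0 as n → ∞, and x* does not depend on the initial condition. -/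
/-- The trajectory generated by the recursion from initial window `s`. -/
noncomputable def pfTraj (M : ℕ) (G : ℕ → (Fin M → ℝ) → ℝ) (s : Fin M → ℝ) : ℕ → ℝ
  | n =>
    if h : n < M then s ⟨n, h⟩
    else G n (fun i : Fin M => pfTraj M G s (n - 1 - (i : ℕ)))
  decreasing_by have := i.isLt; omega

lemma pfTraj_lt (M : ℕ) (G : ℕ → (Fin M → ℝ) → ℝ) (s : Fin M → ℝ) (n : ℕ) (h : n < M) :
    pfTraj M G s n = s ⟨n, h⟩ := by rw [pfTraj, dif_pos h]

lemma pfTraj_ge (M : ℕ) (G : ℕ → (Fin M → ℝ) → ℝ) (s : Fin M → ℝ) (n : ℕ) (h : M ≤ n) :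
    pfTraj M G s n = G n (fun i : Fin M => pfTraj M G s (n - 1 - (i : ℕ))) := by
  rw [pfTraj, dif_neg (by omega)]

/-- Decay estimate for two solutions of the recursion. -/
lemma pf_decay (M : ℕ) (G : ℕ → (Fin M → ℝ) → ℝ) (β : ℝ) (hβ0 : 0 ≤ β) (hβ1 : β < 1)
    (hG : ∀ n (u v : Fin M → ℝ), |G n u - G n v| ≤ β * ‖u - v‖)
    (x y : ℕ → ℝ)
    (hx : ∀ n, M ≤ n → x n = G n (fun i : Fin M => x (n - 1 - (i : ℕ))))
    (hy : ∀ n, M ≤ n → y n = G n (fun i : Fin M => y (n - 1 - (i : ℕ))))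
    (E : ℝ) (hE0 : 0 ≤ E) (hE : ∀ m, m < M → |x m - y m| ≤ E) :
    ∀ k n, k * M ≤ n → |x n - y n| ≤ β ^ k * E := by
  intro k
  induction k with
  | zero =>
    intro n _
    simp only [pow_zero, one_mul]
    induction n using Nat.strong_induction_on with
    | _ n ih =>
      by_cases h : n < M
      · exact hE n h
      · push_neg at h
        rw [hx n h, hy n h]
        have hnorm : ‖(fun i : Fin M => x (n - 1 - (i : ℕ))) -
            (fun i : Fin M => y (n - 1 - (i : ℕ)))‖ ≤ E := by
          rw [pi_norm_le_iff_of_nonneg hE0]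
          intro i
          have hi := i.isLt
          simpa [Real.norm_eq_abs] using ih (n - 1 - (i : ℕ)) (by omega)
        calc |G n _ - G n _| ≤ β * ‖_ - _‖ := hG n _ _
          _ ≤ β * E := by nlinarith [norm_nonneg ((fun i : Fin M => x (n - 1 - (i : ℕ))) -
              (fun i : Fin M => y (n - 1 - (i : ℕ))))]
          _ ≤ E := by nlinarith
  | succ k ihk =>
    intro n hn
    have hMn : M ≤ n := le_trans (by nlinarith [Nat.zero_le (k * M)]) hn
    rw [hx n hMn, hy n hMn]
    have hnorm : ‖(fun i : Fin M => x (n - 1 - (i : ℕ))) -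
        (fun i : Fin M => y (n - 1 - (i : ℕ)))‖ ≤ β ^ k * E := by
      rw [pi_norm_le_iff_of_nonneg (by positivity)]
      intro i
      have hi := i.isLt
      have h1 : k * M ≤ n - 1 - (i : ℕ) := by
        have : (k + 1) * M = k * M + M := by ring
        omega
      simpa [Real.norm_eq_abs] using ihk (n - 1 - (i : ℕ)) h1
    calc |G n _ - G n _| ≤ β * ‖_ - _‖ := hG n _ _
      _ ≤ β * (β ^ k * E) := by
          exact mul_le_mul_of_nonneg_left hnorm hβ0
      _ = β ^ (k + 1) * E := by ring

theorem periodic_forced_converges_PM (M P : ℕ) (hM : 1 ≤ M) (hP : 1 ≤ P)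
    (α : ℝ) (hα : α < 1)
    (G : ℕ → (Fin M → ℝ) → ℝ)
    (hGper : ∀ n, G (n + P) = G n)
    (hGcon : ∀ n (u v : Fin M → ℝ), |G n u - G n v| ≤ α * ‖u - v‖) :
    ∃! xs : ℕ → ℝ,
      (∀ n, xs (n + P * M) = xs n) ∧
      (∀ x : ℕ → ℝ, (∀ n, M ≤ n → x n = G n (fun i : Fin M => x (n - 1 - (i : ℕ)))) →
        Filter.Tendsto (fun n => x n - xs n) Filter.atTop (nhds 0)) := by
  set β : ℝ := max α 0 with hβdef
  have hβ0 : 0 ≤ β := le_max_right _ _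
  have hβ1 : β < 1 := max_lt hα one_pos
  have hGβ : ∀ n (u v : Fin M → ℝ), |G n u - G n v| ≤ β * ‖u - v‖ := fun n u v =>
    le_trans (hGcon n u v) (mul_le_mul_of_nonneg_right (le_max_left _ _) (norm_nonneg _))
  -- periodicity of G with period P*M
  have hGkP : ∀ k n, G (n + k * P) = G n := by
    intro k
    induction k with
    | zero => simp
    | succ k ih =>
      intro n
      have : n + (k + 1) * P = (n + k * P) + P := by ring
      rw [this, hGper, ih]
  have hGPM : ∀ n, G (n + P * M) = G n := fun n => by
    rw [mul_comm P M]; exact hGkP M n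
  -- the PM-step map on windows is a contraction
  set Φ : (Fin M → ℝ) → (Fin M → ℝ) :=
    fun s => fun i => pfTraj M G s (P * M + (i : ℕ)) with hΦdef
  have hΦlip : ∀ s t : Fin M → ℝ, dist (Φ s) (Φ t) ≤ β * dist s t := by
    intro s t
    rw [dist_pi_le_iff (by positivity)]
    intro i
    have hdecay := pf_decay M G β hβ0 hβ1 hGβ (pfTraj M G s) (pfTraj M G t)
      (fun n h => pfTraj_ge M G s n h) (fun n h => pfTraj_ge M G t n h)
      (dist s t) dist_nonneg
      (fun m hm => by
        rw [pfTraj_lt M G s m hm, pfTraj_lt M G t m hm, ← Real.dist_eq]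
        exact dist_le_pi_dist s t ⟨m, hm⟩)
    have h1 : 1 * M ≤ P * M + (i : ℕ) := by
      have : M ≤ P * M := Nat.le_mul_of_pos_left M hP
      omega
    have := hdecay 1 (P * M + (i : ℕ)) h1
    rw [pow_one] at this
    simpa [Φ, Real.dist_eq] using this
  have hcontr : ContractingWith (⟨β, hβ0⟩ : NNReal) Φ := by
    constructor
    · exact_mod_cast hβ1
    · exact LipschitzWith.of_dist_le_mul fun s t => hΦlip s t
  obtain ⟨sstar, hfix⟩ := hcontr.exists_fixedPoint (fun _ => (0 : ℝ))
    (by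
      apply edist_ne_top)
  have hfixeq : Φ sstar = sstar := hfix.1
  set xstar : ℕ → ℝ := pfTraj M G sstar with hxstardef
  have hxstar_rec : ∀ n, M ≤ n → xstar n = G n (fun i : Fin M => xstar (n - 1 - (i : ℕ))) :=
    fun n h => pfTraj_ge M G sstar n h
  -- periodicity of xstar
  have hper : ∀ n, xstar (n + P * M) = xstar n := by
    intro n
    induction n using Nat.strong_induction_on with
    | _ n ih =>
      by_cases h : n < M
      · have hfi := congrFun hfixeq ⟨n, h⟩
        simp only [hΦdef] at hfi
        rw [hxstardef, pfTraj_lt M G sstar n h]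
        rw [show n + P * M = P * M + n by ring]
        exact hfi
      · push_neg at h
        have hge : M ≤ n + P * M := by omega
        rw [hxstar_rec (n + P * M) hge, hGPM, hxstar_rec n h]
        congr 1
        funext i
        have hi := i.isLt
        have heq : n + P * M - 1 - (i : ℕ) = (n - 1 - (i : ℕ)) + P * M := by omega
        rw [heq, ih (n - 1 - (i : ℕ)) (by omega)]
  -- convergence of all trajectories to xstar
  have hconv : ∀ x : ℕ → ℝ,
      (∀ n, M ≤ n → x n = G n (fun i : Fin M => x (n - 1 - (i : ℕ)))) →
      Filter.Tendsto (fun n => x n - xstar n) Filter.atTop (nhds 0) := by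
    intro x hx
    set E : ℝ := ∑ m ∈ Finset.range M, |x m - xstar m| with hEdef
    have hE0 : 0 ≤ E := Finset.sum_nonneg fun m _ => abs_nonneg _
    have hE : ∀ m, m < M → |x m - xstar m| ≤ E := fun m hm =>
      Finset.single_le_sum (fun m _ => abs_nonneg (x m - xstar m))
        (Finset.mem_range.mpr hm)
    have hdecay := pf_decay M G β hβ0 hβ1 hGβ x xstar hx hxstar_rec E hE0 hE
    rw [tendsto_zero_iff_abs_tendsto_zero]
    apply squeeze_zero (fun n => abs_nonneg _)
      (fun n => hdecay (n / M) n (Nat.div_mul_le_self n M))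
    have h1 : Filter.Tendsto (fun k : ℕ => β ^ k * E) Filter.atTop (nhds 0) := by
      simpa using
        (tendsto_pow_atTop_nhds_zero_of_lt_one hβ0 hβ1).mul_const E
    have h2 : Filter.Tendsto (fun n : ℕ => n / M) Filter.atTop Filter.atTop := by
      apply Filter.tendsto_atTop.mpr
      intro b
      filter_upwards [Filter.eventually_ge_atTop (b * M)] with n hn
      exact Nat.le_div_iff_mul_le (by omega) |>.mpr hn
    exact h1.comp h2
  refine ⟨xstar, ⟨hper, hconv⟩, ?_⟩
  -- uniqueness
  rintro ys ⟨hysper, hysconv⟩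
  set x0 : ℕ → ℝ := pfTraj M G (fun _ => 0) with hx0def
  have hx0rec : ∀ n, M ≤ n → x0 n = G n (fun i : Fin M => x0 (n - 1 - (i : ℕ))) :=
    fun n h => pfTraj_ge M G _ n h
  have hd : Filter.Tendsto (fun n => ys n - xstar n) Filter.atTop (nhds 0) := by
    have := (hconv x0 hx0rec).sub (hysconv x0 hx0rec)
    simpa using this
  funext n
  have hkys : ∀ k : ℕ, ys (n + k * (P * M)) = ys n := by
    intro k
    induction k with
    | zero => simp
    | succ k ih =>
      have : n + (k + 1) * (P * M) = (n + k * (P * M)) + P * M := by ring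
      rw [this, hysper, ih]
  have hkxs : ∀ k : ℕ, xstar (n + k * (P * M)) = xstar n := by
    intro k
    induction k with
    | zero => simp
    | succ k ih =>
      have : n + (k + 1) * (P * M) = (n + k * (P * M)) + P * M := by ring
      rw [this, hper, ih]
  have hsub : Filter.Tendsto (fun k : ℕ => n + k * (P * M)) Filter.atTop Filter.atTop := by
    apply Filter.tendsto_atTop_mono (f := fun k : ℕ => k)
    · intro k
      have : 1 ≤ P * M := Nat.one_le_iff_ne_zero.mpr (by positivity)
      nlinarith
    · exact Filter.tendsto_id
  have hconst : Filter.Tendsto (fun _ : ℕ => ys n - xstar n) Filter.atTop (nhds 0) := by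
    have := hd.comp hsub
    simpa [Function.comp_def, hkys, hkxs] using this
  have : ys n - xstar n = 0 := tendsto_nhds_unique tendsto_const_nhds hconst
  linarith
end

section
/- Let G_n : ℝ^M → ℝ be sup-contractive for each n with G_{n+P} = G_n for all n. Then for any initial condition (x₁,...,x_M), the sequence defined by x_n = G_n(x_{n-1},...,x_{n-M}) converges to a unique P-periodic orbit independent of the initial condition: there exists a sequence (x*_n) with x*_{n+P} = x*_n for all n, not depending on the initial condition, such that |x_n - x*_n| → 0. -/
open Filter

noncomputable def orbSeq (M : ℕ) (G : ℕ → (Fin M → ℝ) → ℝ) (c : Fin M → ℝ) : ℕ → ℝ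
  | n =>
    if h : n < M then c ⟨n, h⟩
    else G n (fun i : Fin M => orbSeq M G c (n - 1 - (i : ℕ)))
  termination_by n => n
  decreasing_by
    have := i.2; omega

theorem orbSeq_lt (M : ℕ) (G : ℕ → (Fin M → ℝ) → ℝ) (c : Fin M → ℝ) {n : ℕ} (h : n < M) :
    orbSeq M G c n = c ⟨n, h⟩ := by rw [orbSeq]; simp [h]

theorem orbSeq_ge (M : ℕ) (G : ℕ → (Fin M → ℝ) → ℝ) (c : Fin M → ℝ) {n : ℕ} (h : M ≤ n) :
    orbSeq M G c n = G n (fun i : Fin M => orbSeq M G c (n - 1 - (i : ℕ))) := by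
  rw [orbSeq]; simp [Nat.not_lt.mpr h]

theorem orbSeq_unique (M : ℕ) (G : ℕ → (Fin M → ℝ) → ℝ) (c : Fin M → ℝ) (x : ℕ → ℝ)
    (h0 : ∀ n (h : n < M), x n = c ⟨n, h⟩)
    (hrec : ∀ n, M ≤ n → x n = G n (fun i : Fin M => x (n - 1 - (i : ℕ)))) :
    ∀ n, x n = orbSeq M G c n := by
  intro n
  induction n using Nat.strong_induction_on with
  | _ n ih =>
    by_cases h : n < M
    · rw [h0 n h, orbSeq_lt M G c h]
    · push_neg at h
      rw [hrec n h, orbSeq_ge M G c h]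
      congr 1
      funext i
      exact ih _ (by have := i.2; omega)

theorem key_est (M : ℕ) (hM : 1 ≤ M) (α : ℝ) (hα0 : 0 ≤ α) (hα : α < 1)
    (G : ℕ → (Fin M → ℝ) → ℝ)
    (hGcon : ∀ n (u v : Fin M → ℝ), |G n u - G n v| ≤ α * ‖u - v‖)
    (x y : ℕ → ℝ)
    (hx : ∀ n, M ≤ n → x n = G n (fun i : Fin M => x (n - 1 - (i : ℕ))))
    (hy : ∀ n, M ≤ n → y n = G n (fun i : Fin M => y (n - 1 - (i : ℕ))))
    (C : ℝ) (hC0 : 0 ≤ C) (hC : ∀ i, i < M → |x i - y i| ≤ C) :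
    ∀ n, |x n - y n| ≤ α ^ (n / M) * C := by
  have hM' : 0 < M := hM
  intro n
  induction n using Nat.strong_induction_on with
  | _ n ih =>
    by_cases h : n < M
    · have : n / M = 0 := Nat.div_eq_of_lt h
      rw [this, pow_zero, one_mul]
      exact hC n h
    · push_neg at h
      have h1 : 1 ≤ n / M := (Nat.one_le_div_iff hM').mpr h
      rw [hx n h, hy n h]
      calc |G n (fun i : Fin M => x (n - 1 - (i : ℕ))) - G n (fun i : Fin M => y (n - 1 - (i : ℕ)))|
          ≤ α * ‖(fun i : Fin M => x (n - 1 - (i : ℕ))) - (fun i : Fin M => y (n - 1 - (i : ℕ)))‖ :=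
            hGcon n _ _
        _ ≤ α * (α ^ (n / M - 1) * C) := by
            apply mul_le_mul_of_nonneg_left _ hα0
            apply pi_norm_le_iff_of_nonneg (by positivity) |>.mpr
            intro i
            have hi := i.2
            set m := n - 1 - (i : ℕ) with hm
            have hmn : m < n := by omega
            have hmb : n ≤ m + M := by omega
            have hdiv : n / M - 1 ≤ m / M := by
              have := Nat.div_le_div_right (c := M) hmb
              rw [Nat.add_div_right m hM'] at this
              omega
            calc ‖x m - y m‖ = |x m - y m| := rfl
              _ ≤ α ^ (m / M) * C := ih m hmn
              _ ≤ α ^ (n / M - 1) * C :=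
                  mul_le_mul_of_nonneg_right (pow_le_pow_of_le_one hα0 hα.le hdiv) hC0
        _ = α ^ (n / M) * C := by
            rw [← mul_assoc, ← pow_succ']
            congr 2
            omega

theorem key_tendsto (M : ℕ) (hM : 1 ≤ M) (α : ℝ) (hα0 : 0 ≤ α) (hα : α < 1)
    (G : ℕ → (Fin M → ℝ) → ℝ)
    (hGcon : ∀ n (u v : Fin M → ℝ), |G n u - G n v| ≤ α * ‖u - v‖)
    (x y : ℕ → ℝ)
    (hx : ∀ n, M ≤ n → x n = G n (fun i : Fin M => x (n - 1 - (i : ℕ))))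
    (hy : ∀ n, M ≤ n → y n = G n (fun i : Fin M => y (n - 1 - (i : ℕ)))) :
    Tendsto (fun n => x n - y n) atTop (nhds 0) := by
  have hM' : 0 < M := hM
  set C := ‖(fun i : Fin M => x (i : ℕ) - y (i : ℕ))‖ with hCdef
  have hC0 : 0 ≤ C := norm_nonneg _
  have hC : ∀ i, i < M → |x i - y i| ≤ C := by
    intro i hi
    have := norm_le_pi_norm (fun j : Fin M => x (j : ℕ) - y (j : ℕ)) ⟨i, hi⟩
    simpa using this
  have hbound := key_est M hM α hα0 hα G hGcon x y hx hy C hC0 hC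
  have hdivtop : Tendsto (fun n : ℕ => n / M) atTop atTop := by
    apply tendsto_atTop_atTop.mpr
    intro b
    exact ⟨b * M, fun n hn => (Nat.le_div_iff_mul_le hM').mpr hn⟩
  have hpow : Tendsto (fun n : ℕ => α ^ (n / M)) atTop (nhds 0) :=
    (tendsto_pow_atTop_nhds_zero_of_lt_one hα0 hα).comp hdivtop
  have hmul : Tendsto (fun n : ℕ => α ^ (n / M) * C) atTop (nhds 0) := by
    simpa using hpow.mul_const C
  exact squeeze_zero_norm (fun n => hbound n) hmul

theorem periodic_forced_converges_P (M P : ℕ) (hM : 1 ≤ M) (hP : 1 ≤ P)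
    (α : ℝ) (hα : α < 1)
    (G : ℕ → (Fin M → ℝ) → ℝ)
    (hGper : ∀ n, G (n + P) = G n)
    (hGcon : ∀ n (u v : Fin M → ℝ), |G n u - G n v| ≤ α * ‖u - v‖) :
    ∃! xs : ℕ → ℝ,
      (∀ n, xs (n + P) = xs n) ∧
      (∀ x : ℕ → ℝ, (∀ n, M ≤ n → x n = G n (fun i : Fin M => x (n - 1 - (i : ℕ)))) →
        Filter.Tendsto (fun n => x n - xs n) Filter.atTop (nhds 0)) := by
  have hM' : 0 < M := hM
  have hP' : 0 < P := hP
  -- α is nonnegative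
  have hα0 : 0 ≤ α := by
    have h := hGcon 0 (fun _ => 1) 0
    have hnorm : ‖(fun _ : Fin M => (1:ℝ)) - 0‖ = 1 := by
      have : Nonempty (Fin M) := ⟨⟨0, hM'⟩⟩
      simp [pi_norm_const]
    rw [hnorm, mul_one] at h
    exact le_trans (abs_nonneg _) h
  -- G periodicity for multiples
  have hGper' : ∀ k n, G (n + k * P) = G n := by
    intro k
    induction k with
    | zero => simp
    | succ k ih =>
      intro n
      have : n + (k + 1) * P = (n + k * P) + P := by ring
      rw [this, hGper, ih]
  -- orbits: recurrence holds for orbSeq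
  have horb : ∀ c : Fin M → ℝ, ∀ n, M ≤ n →
      orbSeq M G c n = G n (fun i : Fin M => orbSeq M G c (n - 1 - (i : ℕ))) :=
    fun c n h => orbSeq_ge M G c h
  -- contraction map on initial conditions
  set T : (Fin M → ℝ) → (Fin M → ℝ) := fun c i => orbSeq M G c (M * P + (i : ℕ)) with hTdef
  set K : NNReal := ⟨α ^ P, pow_nonneg hα0 P⟩ with hKdef
  have hKc : (K : ℝ) = α ^ P := rfl
  have hK1 : K < 1 := by
    have : α ^ P < 1 := pow_lt_one₀ hα0 hα (by omega)
    exact_mod_cast this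
  have hT : ContractingWith K T := by
    refine ⟨hK1, LipschitzWith.of_dist_le_mul fun c c' => ?_⟩
    have hd0 : (0:ℝ) ≤ (K : ℝ) * dist c c' := mul_nonneg (by positivity) dist_nonneg
    apply (dist_pi_le_iff hd0).mpr
    intro i
    have hC : ∀ j, j < M → |orbSeq M G c j - orbSeq M G c' j| ≤ dist c c' := by
      intro j hj
      rw [orbSeq_lt M G c hj, orbSeq_lt M G c' hj, ← Real.dist_eq]
      exact dist_le_pi_dist c c' ⟨j, hj⟩
    have hb := key_est M hM α hα0 hα G hGcon (orbSeq M G c) (orbSeq M G c')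
      (horb c) (horb c') (dist c c') dist_nonneg hC (M * P + (i : ℕ))
    have hdivPeq : (M * P + (i : ℕ)) / M = P := by
      rw [Nat.mul_add_div hM']
      simp [Nat.div_eq_of_lt i.2]
    rw [hdivPeq] at hb
    rw [Real.dist_eq]
    exact hb
  -- fixed point
  have hne : Nonempty (Fin M → ℝ) := inferInstance
  set c₀ : Fin M → ℝ := ContractingWith.fixedPoint T hT with hc0
  have hfix : T c₀ = c₀ := hT.fixedPoint_isFixedPt
  set xs : ℕ → ℝ := orbSeq M G c₀ with hxs
  -- xs has period M * P
  have hMP : ∀ n, xs (n + M * P) = xs n := by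
    have huniq : ∀ n, (fun m => xs (m + M * P)) n = orbSeq M G c₀ n := by
      apply orbSeq_unique
      · intro n h
        show xs (n + M * P) = c₀ ⟨n, h⟩
        have h1 : xs (n + M * P) = T c₀ ⟨n, h⟩ := by
          show xs (n + M * P) = orbSeq M G c₀ (M * P + n)
          rw [hxs]
          congr 1
          omega
        rw [h1, hfix]
      · intro n h
        show xs (n + M * P) = G n fun i : Fin M => xs (n - 1 - (i : ℕ) + M * P)
        rw [hxs, orbSeq_ge M G c₀ (by omega : M ≤ n + M * P)]
        rw [hGper' M n]
        congr 1
        funext i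
        have := i.2
        congr 2
        omega
    intro n
    exact huniq n
  have hMPk : ∀ k n, xs (n + k * (M * P)) = xs n := by
    intro k
    induction k with
    | zero => simp
    | succ k ih =>
      intro n
      have h1 : n + (k + 1) * (M * P) = (n + k * (M * P)) + M * P := by ring
      rw [h1, hMP, ih]
  -- shifted sequences satisfy the recurrence
  have hshift : ∀ (x : ℕ → ℝ) (Q : ℕ), (∀ m, G (m + Q) = G m) →
      (∀ n, M ≤ n → x n = G n (fun i : Fin M => x (n - 1 - (i : ℕ)))) →
      (∀ n, M ≤ n → x (n + Q) = G n (fun i : Fin M => x (n - 1 - (i : ℕ) + Q))) := by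
    intro x Q hQ hx n h
    rw [hx (n + Q) (by omega), hQ]
    congr 1
    funext i
    have := i.2
    congr 1
    omega
  have hxs_rec : ∀ n, M ≤ n → xs n = G n (fun i : Fin M => xs (n - 1 - (i : ℕ))) := horb c₀
  -- sequences shifted by a period of G satisfy the same recurrence
  have hshift' : ∀ (x : ℕ → ℝ) (Q : ℕ), (∀ m, G (m + Q) = G m) →
      (∀ n, M ≤ n → x n = G n (fun i : Fin M => x (n - 1 - (i : ℕ)))) →
      (∀ n, M ≤ n → (fun m => x (m + Q)) n = G n (fun i : Fin M => (fun m => x (m + Q)) (n - 1 - (i : ℕ)))) :=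
    fun x Q hQ hx n h => hshift x Q hQ hx n h
  -- xs has period P
  have hPP : ∀ n, xs (n + P) = xs n := by
    have hz_rec := hshift' xs P hGper hxs_rec
    have htend := key_tendsto M hM α hα0 hα G hGcon _ _ hz_rec hxs_rec
    intro n
    have hmap : Tendsto (fun k : ℕ => n + k * (M * P)) atTop atTop := by
      apply tendsto_atTop_atTop.mpr
      intro b
      refine ⟨b, fun k hk => ?_⟩
      have h2 : k ≤ k * (M * P) := Nat.le_mul_of_pos_right k (by positivity)
      omega
    have h2 : Tendsto (fun k : ℕ => xs ((n + k * (M * P)) + P) - xs (n + k * (M * P))) atTop (nhds 0) :=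
      htend.comp hmap
    have hconst : ∀ k : ℕ, xs ((n + k * (M * P)) + P) - xs (n + k * (M * P)) = xs (n + P) - xs n := by
      intro k
      have e1 : (n + k * (M * P)) + P = (n + P) + k * (M * P) := by ring
      rw [e1, hMPk k (n + P), hMPk k n]
    have h3 : Tendsto (fun _ : ℕ => xs (n + P) - xs n) atTop (nhds 0) :=
      h2.congr hconst
    have h4 := tendsto_nhds_unique h3 tendsto_const_nhds
    linarith
  -- assemble
  refine ⟨xs, ⟨hPP, ?_⟩, ?_⟩
  · intro x hx
    exact key_tendsto M hM α hα0 hα G hGcon x xs hx hxs_rec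
  · rintro ys ⟨hysP, hysconv⟩
    set x0 : ℕ → ℝ := orbSeq M G (fun _ => 0) with hx0
    have hx0rec := horb (fun _ => 0)
    have h1 := hysconv x0 hx0rec
    have h2 : Tendsto (fun n => x0 n - xs n) atTop (nhds 0) :=
      key_tendsto M hM α hα0 hα G hGcon x0 xs hx0rec hxs_rec
    have h3 : Tendsto (fun n => ys n - xs n) atTop (nhds 0) := by
      have h4 := h2.sub h1
      have h5 : Tendsto (fun n => ys n - xs n) atTop (nhds (0 - 0)) :=
        h4.congr (fun n => by ring)
      simpa using h5
    have hysPk : ∀ k n, ys (n + k * P) = ys n := by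
      intro k
      induction k with
      | zero => simp
      | succ k ih =>
        intro n
        have e1 : n + (k + 1) * P = (n + k * P) + P := by ring
        rw [e1, hysP, ih]
    have hPPk : ∀ k n, xs (n + k * P) = xs n := by
      intro k
      induction k with
      | zero => simp
      | succ k ih =>
        intro n
        have e1 : n + (k + 1) * P = (n + k * P) + P := by ring
        rw [e1, hPP, ih]
    funext n
    have hmap : Tendsto (fun k : ℕ => n + k * P) atTop atTop := by
      apply tendsto_atTop_atTop.mpr
      intro b
      refine ⟨b, fun k hk => ?_⟩
      have h5 : k ≤ k * P := Nat.le_mul_of_pos_right k hP'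
      omega
    have h6 : Tendsto (fun k : ℕ => ys (n + k * P) - xs (n + k * P)) atTop (nhds 0) :=
      h3.comp hmap
    have h7 : Tendsto (fun _ : ℕ => ys n - xs n) atTop (nhds 0) :=
      h6.congr (fun k => by rw [hysPk k n, hPPk k n])
    have h8 := tendsto_nhds_unique h7 tendsto_const_nhds
    linarith
end

section
/- Let f_i : ℝ × ℕ → ℝ for i = 1,...,M be contractive in the first variable with common constant α < 1 and P-periodic in the second variable, and fix k with 1 ≤ k ≤ M. Then every solution of x_n = k-rank{f₁(x_{n-1}, n), ..., f_M(x_{n-M}, n)} converges to a unique P-periodic orbit independent of the initial condition (x₁,...,x_M). -/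
/-- The `k`-rank of a vector: its `k`-th largest entry (1-indexed, with multiplicity). -/
noncomputable def krank (M k : ℕ) (v : Fin M → ℝ) : ℝ :=
  ((List.ofFn v).insertionSort (· ≥ ·)).getD (k - 1) 0

lemma countP_ofFn_le_countP_ofFn {M : ℕ} (v w : Fin M → ℝ) (p q : ℝ → Bool)
    (h : ∀ i, p (v i) → q (w i)) :
    (List.ofFn v).countP p ≤ (List.ofFn w).countP q := by
  induction M with
  | zero => simp
  | succ m ih =>
    rw [List.ofFn_succ (f := v), List.ofFn_succ (f := w), List.countP_cons, List.countP_cons]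
    have h0 := h 0
    have := ih (fun i => v i.succ) (fun i => w i.succ) (fun i => h i.succ)
    by_cases hp : p (v 0) = true
    · simp [hp, h0 hp]; omega
    · simp [hp]
      split <;> omega

lemma krank_le_add {M k : ℕ} (hk1 : 1 ≤ k) (hkM : k ≤ M) (v w : Fin M → ℝ) (c : ℝ)
    (h : ∀ i, v i ≤ w i + c) : krank M k v ≤ krank M k w + c := by
  classical
  set lv := (List.ofFn v).insertionSort (· ≥ ·) with hlv
  set lw := (List.ofFn w).insertionSort (· ≥ ·) with hlw
  have hsv : lv.Pairwise (· ≥ ·) := List.pairwise_insertionSort _ _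
  have hsw : lw.Pairwise (· ≥ ·) := List.pairwise_insertionSort _ _
  have hpv : lv.Perm (List.ofFn v) := List.perm_insertionSort _ _
  have hpw : lw.Perm (List.ofFn w) := List.perm_insertionSort _ _
  have hlenv : lv.length = M := by
    rw [hlv, List.length_insertionSort, List.length_ofFn]
  have hlenw : lw.length = M := by
    rw [hlw, List.length_insertionSort, List.length_ofFn]
  set j := k - 1 with hj
  have hjM : j < M := by omega
  have hjv : j < lv.length := by omega
  have hjw : j < lw.length := by omega
  set t := lv[j] with ht
  -- Step 1: at least j+1 entries of lv are ≥ t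
  have step1 : j + 1 ≤ lv.countP (fun x => decide (t ≤ x)) := by
    have htake : (lv.take (j+1)).countP (fun x => decide (t ≤ x)) = j + 1 := by
      rw [List.countP_eq_length.mpr, List.length_take]
      · omega
      · intro a ha
        rw [List.mem_iff_getElem] at ha
        obtain ⟨i, hi, rfl⟩ := ha
        have hi' : i < j + 1 := by
          have := List.length_take (i := j+1) (l := lv); omega
        rw [List.getElem_take]
        simp only [decide_eq_true_eq]
        have hij : i ≤ j := by omega
        rcases Nat.eq_or_lt_of_le hij with rfl | hlt
        · exact le_refl _
        · exact hsv.rel_get_of_lt (a := ⟨i, by omega⟩) (b := ⟨j, hjv⟩) hlt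
    calc j + 1 = (lv.take (j+1)).countP (fun x => decide (t ≤ x)) := htake.symm
    _ ≤ lv.countP (fun x => decide (t ≤ x)) :=
        List.Sublist.countP_le (List.take_sublist _ _)
  -- transfer to lw
  have step2 : j + 1 ≤ lw.countP (fun x => decide (t - c ≤ x)) := by
    calc j + 1 ≤ lv.countP (fun x => decide (t ≤ x)) := step1
    _ = (List.ofFn v).countP (fun x => decide (t ≤ x)) := hpv.countP_eq _
    _ ≤ (List.ofFn w).countP (fun x => decide (t - c ≤ x)) := by
        apply countP_ofFn_le_countP_ofFn
        intro i hi
        simp only [decide_eq_true_eq] at hi ⊢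
        have := h i; linarith
    _ = lw.countP (fun x => decide (t - c ≤ x)) := (hpw.countP_eq _).symm
  -- Step 3: conclude t - c ≤ lw[j]
  have step3 : t - c ≤ lw[j] := by
    by_contra hlt
    push_neg at hlt
    have hsplit : lw.countP (fun x => decide (t - c ≤ x)) ≤ j := by
      have := List.take_append_drop j lw
      have hcnt : lw.countP (fun x => decide (t - c ≤ x)) =
          (lw.take j).countP (fun x => decide (t - c ≤ x)) +
          (lw.drop j).countP (fun x => decide (t - c ≤ x)) := by
        conv_lhs => rw [← this]
        rw [List.countP_append]
      have h1 : (lw.take j).countP (fun x => decide (t - c ≤ x)) ≤ j := by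
        calc _ ≤ (lw.take j).length := List.countP_le_length
        _ ≤ j := by rw [List.length_take]; omega
      have h2 : (lw.drop j).countP (fun x => decide (t - c ≤ x)) = 0 := by
        rw [List.countP_eq_zero]
        intro a ha
        rw [List.mem_iff_getElem] at ha
        obtain ⟨i, hi, rfl⟩ := ha
        have hlen : j + i < lw.length := by have := List.length_drop (i := j) (l := lw); omega
        rw [List.getElem_drop]
        simp only [decide_eq_true_eq]
        intro hge
        have hji : lw[j] ≥ lw[j + i] := by
          rcases Nat.eq_zero_or_pos i with rfl | hpos
          · simp
          · exact hsw.rel_get_of_lt (a := ⟨j, hjw⟩)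
              (b := ⟨j + i, by have := List.length_drop (i := j) (l := lw); omega⟩) (by simp; omega)
        linarith
      omega
    omega
  -- assemble
  have e1 : krank M k v = t := by
    rw [krank, ← hlv, List.getD_eq_getElem lv 0 (by omega : k - 1 < lv.length)]
  have e2 : krank M k w = lw[j] := by
    rw [krank, ← hlw, List.getD_eq_getElem lw 0 (by omega : k - 1 < lw.length)]
  rw [e1, e2]; linarith

lemma abs_krank_sub_le {M k : ℕ} (hk1 : 1 ≤ k) (hkM : k ≤ M) (v w : Fin M → ℝ) (c : ℝ)
    (h : ∀ i, |v i - w i| ≤ c) : |krank M k v - krank M k w| ≤ c := by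
  rw [abs_sub_le_iff]
  constructor
  · have := krank_le_add hk1 hkM v w c (fun i => by have := abs_le.mp (h i); linarith)
    linarith
  · have := krank_le_add hk1 hkM w v c (fun i => by have := abs_le.mp (h i); linarith)
    linarith

noncomputable def sol (M k : ℕ) (f : Fin M → ℝ → ℕ → ℝ) (c : Fin M → ℝ) : ℕ → ℝ
  | n =>
    if h : n < M then c ⟨n, h⟩
    else krank M k (fun i : Fin M => f i (sol M k f c (n - 1 - (i : ℕ))) n)
  decreasing_by have := i.isLt; omega

lemma sol_lt {M k : ℕ} {f : Fin M → ℝ → ℕ → ℝ} {c : Fin M → ℝ} {n : ℕ} (h : n < M) :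
    sol M k f c n = c ⟨n, h⟩ := by rw [sol]; simp [h]

lemma sol_ge {M k : ℕ} {f : Fin M → ℝ → ℕ → ℝ} {c : Fin M → ℝ} {n : ℕ} (h : M ≤ n) :
    sol M k f c n = krank M k (fun i : Fin M => f i (sol M k f c (n - 1 - (i : ℕ))) n) := by
  rw [sol]; simp [Nat.not_lt.mpr h]

lemma key_contraction {M k : ℕ} (hk1 : 1 ≤ k) (hkM : k ≤ M) {α : ℝ} (hα0 : 0 ≤ α) (hα : α < 1)
    {f : Fin M → ℝ → ℕ → ℝ}
    (hcon : ∀ i n (x y : ℝ), |f i x n - f i y n| ≤ α * |x - y|)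
    {x y : ℕ → ℝ}
    (hx : ∀ n, M ≤ n → x n = krank M k (fun i : Fin M => f i (x (n - 1 - (i : ℕ))) n))
    (hy : ∀ n, M ≤ n → y n = krank M k (fun i : Fin M => f i (y (n - 1 - (i : ℕ))) n))
    {A : ℝ} (hA0 : 0 ≤ A) (hA : ∀ j, j < M → |x j - y j| ≤ A) :
    ∀ n, |x n - y n| ≤ α ^ (n / M) * A := by
  intro n
  induction n using Nat.strong_induction_on with
  | _ n ih =>
    by_cases hn : n < M
    · rw [Nat.div_eq_of_lt hn]; simpa using hA n hn
    · push_neg at hn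
      have hM1 : 1 ≤ M := le_trans hk1 hkM
      rw [hx n hn, hy n hn]
      have hdiv : n / M = (n - M) / M + 1 := by
        conv_lhs => rw [← Nat.sub_add_cancel hn]
        rw [Nat.add_div_right _ (by omega)]
      have hpow0 : (0:ℝ) ≤ α ^ ((n-M)/M) := pow_nonneg hα0 _
      have key0 : ∀ i : Fin M,
          |f i (x (n-1-(i:ℕ))) n - f i (y (n-1-(i:ℕ))) n| ≤ α * (α ^ ((n-M)/M) * A) := by
        intro i
        have h1 := hcon i n (x (n-1-(i:ℕ))) (y (n-1-(i:ℕ)))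
        have h2 := ih (n-1-(i:ℕ)) (by have := i.isLt; omega)
        have h3 : α ^ ((n-1-(i:ℕ))/M) ≤ α ^ ((n-M)/M) :=
          pow_le_pow_of_le_one hα0 hα.le (Nat.div_le_div_right (by have := i.isLt; omega))
        have h4 : |x (n-1-(i:ℕ)) - y (n-1-(i:ℕ))| ≤ α ^ ((n-M)/M) * A :=
          h2.trans (by nlinarith)
        calc |f i (x (n-1-(i:ℕ))) n - f i (y (n-1-(i:ℕ))) n|
            ≤ α * |x (n-1-(i:ℕ)) - y (n-1-(i:ℕ))| := h1
          _ ≤ α * (α ^ ((n-M)/M) * A) := by nlinarith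
      have hk := abs_krank_sub_le hk1 hkM _ _ _ key0
      rw [hdiv, pow_succ]
      calc |krank M k (fun i : Fin M => f i (x (n-1-(i:ℕ))) n) -
            krank M k (fun i : Fin M => f i (y (n-1-(i:ℕ))) n)|
          ≤ α * (α ^ ((n-M)/M) * A) := hk
        _ = α ^ ((n-M)/M) * α * A := by ring

lemma periodic_tendsto_zero {P : ℕ} (hP : 1 ≤ P) {h : ℕ → ℝ}
    (hper : ∀ n, h (n + P) = h n)
    (hlim : Filter.Tendsto h Filter.atTop (nhds 0)) : ∀ n, h n = 0 := by
  intro m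
  have hconst : ∀ j : ℕ, h (m + j * P) = h m := by
    intro j
    induction j with
    | zero => simp
    | succ j ih =>
      have : m + (j + 1) * P = (m + j * P) + P := by ring
      rw [this, hper, ih]
  have htop : Filter.Tendsto (fun j : ℕ => m + j * P) Filter.atTop Filter.atTop := by
    apply Filter.tendsto_atTop_mono (f := fun j : ℕ => j)
    · intro j
      have : j ≤ j * P := Nat.le_mul_of_pos_right j hP
      omega
    · exact Filter.tendsto_id
  have h1 : Filter.Tendsto (fun j : ℕ => h (m + j * P)) Filter.atTop (nhds 0) :=
    hlim.comp htop
  have h2 : Filter.Tendsto (fun _ : ℕ => h m) Filter.atTop (nhds 0) := by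
    simpa only [hconst] using h1
  exact tendsto_nhds_unique tendsto_const_nhds h2

lemma tendsto_pow_div {α : ℝ} (hα0 : 0 ≤ α) (hα : α < 1) {M : ℕ} (hM : 1 ≤ M) :
    Filter.Tendsto (fun n : ℕ => α ^ (n / M)) Filter.atTop (nhds 0) := by
  apply (tendsto_pow_atTop_nhds_zero_of_lt_one hα0 hα).comp
  rw [Filter.tendsto_atTop_atTop]
  intro b
  refine ⟨b * M, fun n hn => ?_⟩
  calc b = b * M / M := (Nat.mul_div_cancel b (by omega)).symm
  _ ≤ n / M := Nat.div_le_div_right hn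

theorem rank_type_periodic_forced (M P k : ℕ) (hM : 1 ≤ M) (hP : 1 ≤ P)
    (hk1 : 1 ≤ k) (hkM : k ≤ M)
    (α : ℝ) (hα : α < 1)
    (f : Fin M → ℝ → ℕ → ℝ)
    (hcon : ∀ i n (x y : ℝ), |f i x n - f i y n| ≤ α * |x - y|)
    (hper : ∀ i x n, f i x (n + P) = f i x n) :
    ∃! xs : ℕ → ℝ,
      (∀ n, xs (n + P) = xs n) ∧
      (∀ x : ℕ → ℝ,
        (∀ n, M ≤ n → x n = krank M k (fun i : Fin M => f i (x (n - 1 - (i : ℕ))) n)) →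
        Filter.Tendsto (fun n => x n - xs n) Filter.atTop (nhds 0)) := by
  classical
  -- α must be nonnegative
  have hα0 : 0 ≤ α := by
    by_contra hneg
    push_neg at hneg
    have h1 := hcon ⟨0, hM⟩ 0 0 1
    have h2 : (0:ℝ) ≤ |f ⟨0, hM⟩ 0 0 - f ⟨0, hM⟩ 1 0| := abs_nonneg _
    have h3 : |(0:ℝ) - 1| = 1 := by norm_num
    rw [h3] at h1
    linarith
  set L := M * P with hL
  have hLpos : 0 < L := Nat.mul_pos hM hP
  have hLM : M ≤ L := Nat.le_mul_of_pos_right M hP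
  have hperm : ∀ (m : ℕ) i x n, f i x (n + m * P) = f i x n := by
    intro m
    induction m with
    | zero => simp
    | succ m ih =>
      intro i x n
      have : n + (m + 1) * P = (n + m * P) + P := by ring
      rw [this, hper, ih]
  have hperL : ∀ i x n, f i x (n + L) = f i x n := fun i x n => hperm M i x n
  -- all sol's are solutions
  have hsol : ∀ c n, M ≤ n →
      sol M k f c n = krank M k (fun i : Fin M => f i (sol M k f c (n - 1 - (i : ℕ))) n) :=
    fun c n hn => sol_ge hn
  -- the window map G is a contraction
  set G : (Fin M → ℝ) → (Fin M → ℝ) := fun c j => sol M k f c (L + (j : ℕ)) with hG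
  have hGlip : ∀ c c', dist (G c) (G c') ≤ α * dist c c' := by
    intro c c'
    rw [dist_pi_le_iff (by positivity)]
    intro j
    have hA : ∀ j', j' < M → |sol M k f c j' - sol M k f c' j'| ≤ dist c c' := by
      intro j' hj'
      rw [sol_lt hj', sol_lt hj']
      have := dist_le_pi_dist c c' ⟨j', hj'⟩
      rwa [Real.dist_eq] at this
    have hkey := key_contraction hk1 hkM hα0 hα hcon (hsol c) (hsol c')
      (A := dist c c') dist_nonneg hA (L + (j : ℕ))
    have h1le : 1 ≤ (L + (j : ℕ)) / M := by
      have hLdiv : L / M = P := by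
        rw [hL]; exact Nat.mul_div_cancel_left P (by omega)
      have h2 : L / M ≤ (L + (j : ℕ)) / M := Nat.div_le_div_right (by omega)
      omega
    have hpow : α ^ ((L + (j : ℕ)) / M) ≤ α := by
      calc α ^ ((L + (j : ℕ)) / M) ≤ α ^ 1 := pow_le_pow_of_le_one hα0 hα.le h1le
      _ = α := pow_one α
    rw [Real.dist_eq]
    calc |G c j - G c' j| = |sol M k f c (L + (j : ℕ)) - sol M k f c' (L + (j : ℕ))| := rfl
    _ ≤ α ^ ((L + (j : ℕ)) / M) * dist c c' := hkey
    _ ≤ α * dist c c' := mul_le_mul_of_nonneg_right hpow dist_nonneg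
  set K : NNReal := ⟨α, hα0⟩ with hK
  have hcw : ContractingWith K G := by
    constructor
    · exact_mod_cast hα
    · exact LipschitzWith.of_dist_le_mul (fun c c' => hGlip c c')
  set cs := ContractingWith.fixedPoint G hcw with hcs
  have hfix : G cs = cs := hcw.fixedPoint_isFixedPt
  set y := sol M k f cs with hy
  have hysol : ∀ n, M ≤ n → y n = krank M k (fun i : Fin M => f i (y (n - 1 - (i : ℕ))) n) :=
    hsol cs
  -- y is L-periodic
  have hyL : ∀ n, y (n + L) = y n := by
    set z : ℕ → ℝ := fun n => y (n + L) with hz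
    have hzsol : ∀ n, M ≤ n → z n = krank M k (fun i : Fin M => f i (z (n - 1 - (i : ℕ))) n) := by
      intro n hn
      show y (n + L) = _
      rw [hysol (n + L) (by omega)]
      congr 1
      funext i
      have e1 : n + L - 1 - (i : ℕ) = (n - 1 - (i : ℕ)) + L := by have := i.isLt; omega
      rw [e1, hperL]
    have hz0 : ∀ j, j < M → |z j - y j| ≤ 0 := by
      intro j hj
      have heq : z j = y j := by
        show y (j + L) = y j
        have h1 : y (j + L) = G cs ⟨j, hj⟩ := by
          show sol M k f cs (j + L) = sol M k f cs (L + j)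
          rw [Nat.add_comm]
        rw [h1, hfix, hy, sol_lt hj]
      simp [heq]
    intro n
    have := key_contraction hk1 hkM hα0 hα hcon hzsol hysol (A := 0) le_rfl hz0 n
    have h2 : |z n - y n| ≤ 0 := by simpa using this
    have h3 : z n = y n := by
      have := abs_nonneg (z n - y n)
      have h4 : |z n - y n| = 0 := le_antisymm h2 this
      have := abs_eq_zero.mp h4
      linarith
    exact h3
  -- y is P-periodic
  set w : ℕ → ℝ := fun n => y (n + P) with hw
  have hwsol : ∀ n, M ≤ n → w n = krank M k (fun i : Fin M => f i (w (n - 1 - (i : ℕ))) n) := by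
    intro n hn
    show y (n + P) = _
    rw [hysol (n + P) (by omega)]
    congr 1
    funext i
    have e1 : n + P - 1 - (i : ℕ) = (n - 1 - (i : ℕ)) + P := by have := i.isLt; omega
    rw [e1, hper]
  have conv_of_sol : ∀ x : ℕ → ℝ,
      (∀ n, M ≤ n → x n = krank M k (fun i : Fin M => f i (x (n - 1 - (i : ℕ))) n)) →
      Filter.Tendsto (fun n => x n - y n) Filter.atTop (nhds 0) := by
    intro x hx
    set A := ∑ j : Fin M, |x (j : ℕ) - y (j : ℕ)| with hA
    have hA0 : 0 ≤ A := Finset.sum_nonneg (fun j _ => abs_nonneg _)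
    have hAb : ∀ j, j < M → |x j - y j| ≤ A := by
      intro j hj
      have := Finset.single_le_sum (f := fun j : Fin M => |x (j : ℕ) - y (j : ℕ)|)
        (fun i _ => abs_nonneg _) (Finset.mem_univ ⟨j, hj⟩)
      simpa using this
    have hbound := key_contraction hk1 hkM hα0 hα hcon hx hysol hA0 hAb
    apply squeeze_zero_norm (a := fun n => α ^ (n / M) * A)
    · intro n
      rw [Real.norm_eq_abs]
      exact hbound n
    · have := (tendsto_pow_div hα0 hα hM).mul_const A
      simpa using this
  have hyPer : ∀ n, y (n + P) = y n := by
    have hconv := conv_of_sol w hwsol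
    have hdper : ∀ n, (w (n + L) - y (n + L)) = w n - y n := by
      intro n
      have e1 : w (n + L) = w n := by
        show y (n + L + P) = y (n + P)
        have : n + L + P = (n + P) + L := by ring
        rw [this, hyL]
      rw [e1, hyL]
    have := periodic_tendsto_zero (Nat.one_le_iff_ne_zero.mpr (by omega))
      hdper hconv
    intro n
    have := this n
    show w n = y n
    linarith
  refine ⟨y, ⟨hyPer, conv_of_sol⟩, ?_⟩
  rintro xs' ⟨hper', hconv'⟩
  have h0 := hconv' y hysol
  have hdP : ∀ n, (y (n + P) - xs' (n + P)) = y n - xs' n := by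
    intro n
    rw [hyPer, hper']
  have hzero := periodic_tendsto_zero hP hdP h0
  funext n
  have := hzero n
  linarith
end

section
/- Let f_i : ℝ → ℝ be contractions with fixed points r_i for 1 ≤ i ≤ M, and define x_n = k-rank{f₁(x_{n-1}), ..., f_M(x_{n-M})} for n > M. Then for every initial condition, lim_{n→∞} x_n = k-rank{r₁,...,r_M}. -/
section aux

lemma sorted_countP_ge {s : List ℝ} (hs : s.Pairwise (· ≥ ·)) {p : ℝ → Bool}
    (hp : ∀ a b : ℝ, b ≤ a → p b = true → p a = true)
    {j : ℕ} (hj : j < s.length) (h : p (s.get ⟨j, hj⟩) = true) :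
    j + 1 ≤ s.countP p := by
  have h1 : s.countP p = (s.take (j+1)).countP p + (s.drop (j+1)).countP p := by
    rw [← List.countP_append, List.take_append_drop]
  have h2 : (s.take (j+1)).countP p = (s.take (j+1)).length := by
    rw [List.countP_eq_length]
    intro a ha
    obtain ⟨i, hi, rfl⟩ := List.getElem_of_mem ha
    have hlen : i < s.length := by
      rw [List.length_take] at hi; omega
    rw [List.getElem_take]
    have hle : s.get ⟨j, hj⟩ ≤ s.get ⟨i, hlen⟩ := by
      apply hs.rel_get_of_le
      show (⟨i, hlen⟩ : Fin _) ≤ ⟨j, hj⟩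
      rw [List.length_take] at hi
      exact Fin.mk_le_mk.2 (by omega)
    exact hp _ _ hle h
  have h3 : (s.take (j+1)).length = j + 1 := by
    rw [List.length_take]; omega
  omega

lemma sorted_countP_le {s : List ℝ} (hs : s.Pairwise (· ≥ ·)) {p : ℝ → Bool}
    (hp : ∀ a b : ℝ, b ≤ a → p b = true → p a = true)
    {j : ℕ} (hj : j < s.length) (h : ¬ (p (s.get ⟨j, hj⟩) = true)) :
    s.countP p ≤ j := by
  have h1 : s.countP p = (s.take j).countP p + (s.drop j).countP p := by
    rw [← List.countP_append, List.take_append_drop]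
  have h2 : (s.drop j).countP p = 0 := by
    rw [List.countP_eq_zero]
    intro a ha
    obtain ⟨i, hi, rfl⟩ := List.getElem_of_mem ha
    have hlen : j + i < s.length := by
      rw [List.length_drop] at hi; omega
    rw [List.getElem_drop]
    intro hpa
    refine h (hp _ _ ?_ hpa)
    apply hs.rel_get_of_le
    exact Fin.mk_le_mk.2 (by omega)
  have h3 : (s.take j).countP p ≤ j := by
    refine le_trans List.countP_le_length ?_
    rw [List.length_take]; omega
  omega

lemma krank_ge_iff {M k : ℕ} (hk1 : 1 ≤ k) (hkM : k ≤ M) (v : Fin M → ℝ) (t : ℝ) :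
    t ≤ krank M k v ↔ k ≤ (List.ofFn v).countP (fun a => decide (t ≤ a)) := by
  set s := (List.ofFn v).insertionSort (· ≥ ·) with hsdef
  have hperm : s.Perm (List.ofFn v) := List.perm_insertionSort _ _
  have hsort : s.Pairwise (· ≥ ·) := List.pairwise_insertionSort _ _
  have hlen : s.length = M := by
    rw [hsdef, List.length_insertionSort, List.length_ofFn]
  have hcount : (List.ofFn v).countP (fun a => decide (t ≤ a)) = s.countP (fun a => decide (t ≤ a)) :=
    (hperm.countP_eq _).symm
  have hj : k - 1 < s.length := by omega
  have hget : krank M k v = s.get ⟨k - 1, hj⟩ := List.getD_eq_get _ _ ⟨k - 1, hj⟩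
  have hp : ∀ a b : ℝ, b ≤ a → decide (t ≤ b) = true → decide (t ≤ a) = true := by
    intro a b hab hb
    simp only [decide_eq_true_eq] at *
    linarith
  rw [hcount, hget]
  constructor
  · intro h
    have := sorted_countP_ge hsort hp hj (by simpa using h)
    omega
  · intro h
    by_contra hcon
    have := sorted_countP_le hsort hp hj (by simpa using hcon)
    omega

lemma krank_le_iff {M k : ℕ} (hk1 : 1 ≤ k) (hkM : k ≤ M) (v : Fin M → ℝ) (t : ℝ) :
    krank M k v ≤ t ↔ (List.ofFn v).countP (fun a => decide (t < a)) < k := by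
  set s := (List.ofFn v).insertionSort (· ≥ ·) with hsdef
  have hperm : s.Perm (List.ofFn v) := List.perm_insertionSort _ _
  have hsort : s.Pairwise (· ≥ ·) := List.pairwise_insertionSort _ _
  have hlen : s.length = M := by
    rw [hsdef, List.length_insertionSort, List.length_ofFn]
  have hcount : (List.ofFn v).countP (fun a => decide (t < a)) = s.countP (fun a => decide (t < a)) :=
    (hperm.countP_eq _).symm
  have hj : k - 1 < s.length := by omega
  have hget : krank M k v = s.get ⟨k - 1, hj⟩ := List.getD_eq_get _ _ ⟨k - 1, hj⟩
  have hp : ∀ a b : ℝ, b ≤ a → decide (t < b) = true → decide (t < a) = true := by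
    intro a b hab hb
    simp only [decide_eq_true_eq] at *
    linarith
  rw [hcount, hget]
  constructor
  · intro h
    have := sorted_countP_le hsort hp hj (by simpa using not_lt.2 h)
    omega
  · intro h
    by_contra hcon
    push_neg at hcon
    have := sorted_countP_ge hsort hp hj (by simpa using hcon)
    omega

lemma countP_ofFn_mono {M : ℕ} (p q : ℝ → Bool) (u w : Fin M → ℝ)
    (h : ∀ i, p (u i) = true → q (w i) = true) :
    (List.ofFn u).countP p ≤ (List.ofFn w).countP q := by
  rw [List.ofFn_eq_map, List.ofFn_eq_map, List.countP_map, List.countP_map]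
  exact List.countP_mono_left (fun i _ => h i)

lemma step_bound {M k : ℕ} (hk1 : 1 ≤ k) (hkM : k ≤ M)
    (α : ℝ) (h0 : 0 ≤ α) (h1 : α ≤ 1)
    (f : Fin M → ℝ → ℝ) (hcon : ∀ i (a b : ℝ), |f i a - f i b| ≤ α * |a - b|)
    (r : Fin M → ℝ) (hr : ∀ i, f i (r i) = r i)
    (e : ℝ) (he : 0 ≤ e)
    (y : Fin M → ℝ) (hy : ∀ i, |y i - krank M k r| ≤ e) :
    |krank M k (fun i => f i (y i)) - krank M k r| ≤ α * e := by
  set R := krank M k r with hR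
  rw [abs_le]
  constructor
  · -- lower bound
    have hcount : k ≤ (List.ofFn r).countP (fun a => decide (R ≤ a)) :=
      (krank_ge_iff hk1 hkM r R).1 le_rfl
    have hmono : (List.ofFn r).countP (fun a => decide (R ≤ a)) ≤
        (List.ofFn (fun i => f i (y i))).countP (fun a => decide (R - α * e ≤ a)) := by
      apply countP_ofFn_mono
      intro i hi
      simp only [decide_eq_true_eq] at *
      have hyi := abs_le.1 (hy i)
      have h2 : |y i - r i| ≤ (r i - R) + e := by
        have := abs_sub_le (y i) R (r i)
        have : |R - r i| = r i - R := by rw [abs_sub_comm, abs_of_nonneg (by linarith)]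
        have := abs_le.1 (hy i)
        rw [abs_le]
        constructor <;> nlinarith [abs_le.1 (hy i)]
      have h3 : |f i (y i) - r i| ≤ α * ((r i - R) + e) := by
        calc |f i (y i) - r i| = |f i (y i) - f i (r i)| := by rw [hr i]
          _ ≤ α * |y i - r i| := hcon i _ _
          _ ≤ α * ((r i - R) + e) := mul_le_mul_of_nonneg_left h2 h0
      have h4 := abs_le.1 h3
      nlinarith [h4.1]
    have := (krank_ge_iff hk1 hkM (fun i => f i (y i)) (R - α * e)).2 (le_trans hcount hmono)
    linarith
  · -- upper bound
    have hcount : (List.ofFn r).countP (fun a => decide (R < a)) < k :=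
      (krank_le_iff hk1 hkM r R).1 le_rfl
    have hmono : (List.ofFn (fun i => f i (y i))).countP (fun a => decide (R + α * e < a)) ≤
        (List.ofFn r).countP (fun a => decide (R < a)) := by
      apply countP_ofFn_mono
      intro i hi
      simp only [decide_eq_true_eq] at *
      by_contra hri
      push_neg at hri
      have hyi := abs_le.1 (hy i)
      have h2 : |y i - r i| ≤ (R - r i) + e := by
        rw [abs_le]
        constructor <;> nlinarith
      have h3 : |f i (y i) - r i| ≤ α * ((R - r i) + e) := by
        calc |f i (y i) - r i| = |f i (y i) - f i (r i)| := by rw [hr i]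
          _ ≤ α * |y i - r i| := hcon i _ _
          _ ≤ α * ((R - r i) + e) := mul_le_mul_of_nonneg_left h2 h0
      have h4 := abs_le.1 h3
      nlinarith [h4.2]
    have := (krank_le_iff hk1 hkM (fun i => f i (y i)) (R + α * e)).2
      (lt_of_le_of_lt hmono hcount)
    linarith

end aux

theorem rank_type_autonomous_limit (M k : ℕ) (hM : 1 ≤ M) (hk1 : 1 ≤ k) (hkM : k ≤ M)
    (α : ℝ) (hα : α < 1)
    (f : Fin M → ℝ → ℝ)
    (hcon : ∀ i (x y : ℝ), |f i x - f i y| ≤ α * |x - y|)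
    (r : Fin M → ℝ) (hr : ∀ i, f i (r i) = r i)
    (x : ℕ → ℝ)
    (hx : ∀ n, M ≤ n → x n = krank M k (fun i : Fin M => f i (x (n - 1 - (i : ℕ))))) :
    Filter.Tendsto x Filter.atTop (nhds (krank M k r)) := by
  set α' := max α 0 with hα'
  have h0 : 0 ≤ α' := le_max_right _ _
  have h1 : α' < 1 := max_lt hα one_pos
  have hcon' : ∀ i (a b : ℝ), |f i a - f i b| ≤ α' * |a - b| := fun i a b =>
    le_trans (hcon i a b) (mul_le_mul_of_nonneg_right (le_max_left _ _) (abs_nonneg _))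
  set R := krank M k r with hRdef
  have hMpos : 0 < M := hM
  have hmem : (0 : ℕ) ∈ Finset.range M := Finset.mem_range.2 hMpos
  set B := (Finset.range M).sup' ⟨0, hmem⟩ (fun j => |x j - R|) with hB
  have hB0 : 0 ≤ B := le_trans (abs_nonneg _) (Finset.le_sup' (fun j => |x j - R|) hmem)
  have key : ∀ n, |x n - R| ≤ B * α' ^ (n / M) := by
    intro n
    induction n using Nat.strong_induction_on with
    | _ n ih =>
      by_cases hn : n < M
      · rw [Nat.div_eq_of_lt hn, pow_zero, mul_one]
        exact Finset.le_sup' (fun j => |x j - R|) (Finset.mem_range.2 hn)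
      · push_neg at hn
        rw [hx n hn]
        have hdiv : n / M = (n - M) / M + 1 := by
          conv_lhs => rw [← Nat.sub_add_cancel hn]
          rw [Nat.add_div_right _ hMpos]
        have hwin : ∀ i : Fin M, |x (n - 1 - (i : ℕ)) - R| ≤ B * α' ^ ((n - M) / M) := by
          intro i
          have hi := i.2
          have hlt : n - 1 - (i : ℕ) < n := by omega
          refine le_trans (ih _ hlt) ?_
          have hdd : (n - M) / M ≤ (n - 1 - (i : ℕ)) / M :=
            Nat.div_le_div_right (by omega)
          exact mul_le_mul_of_nonneg_left
            (pow_le_pow_of_le_one h0 h1.le hdd) hB0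
        have hstep := step_bound hk1 hkM α' h0 h1.le f hcon' r hr
          (B * α' ^ ((n - M) / M)) (by positivity) (fun i => x (n - 1 - (i : ℕ))) hwin
        calc |krank M k (fun i : Fin M => f i (x (n - 1 - (i : ℕ)))) - R|
            ≤ α' * (B * α' ^ ((n - M) / M)) := hstep
          _ = B * α' ^ ((n - M) / M + 1) := by ring
          _ = B * α' ^ (n / M) := by rw [hdiv]
  have hdivt : Filter.Tendsto (fun n : ℕ => n / M) Filter.atTop Filter.atTop := by
    apply Filter.tendsto_atTop_atTop.2
    intro b
    exact ⟨b * M, fun n hn => (Nat.le_div_iff_mul_le hMpos).2 hn⟩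
  have hg : Filter.Tendsto (fun n : ℕ => B * α' ^ (n / M)) Filter.atTop (nhds 0) := by
    have hpow := tendsto_pow_atTop_nhds_zero_of_lt_one h0 h1
    have := (hpow.comp hdivt).const_mul B
    simpa using this
  have habs := squeeze_zero (fun n => abs_nonneg _) key hg
  rw [tendsto_iff_dist_tendsto_zero]
  simpa [Real.dist_eq] using habs
end

section
/- The constant value x* = k-rank{r₁,...,r_M} is a fixed point of the rank-type recurrence: if x_{n-1} = x_{n-2} = ... = x_{n-M} = x*, then k-rank{f₁(x*),...,f_M(x*)} = x*, where r_i is the fixed point of the contraction f_i. -/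
lemma drop_le (L : List ℝ) (hL : L.Pairwise (· ≥ ·)) (k : ℕ) (hk : k < L.length) :
    ∀ a ∈ L.drop k, a ≤ L[k] := by
  intro a ha
  obtain ⟨i, hi, rfl⟩ := List.mem_iff_getElem.1 ha
  rw [List.getElem_drop]
  exact hL.rel_get_of_le (a := ⟨k, hk⟩) (b := ⟨k + i, by simp [List.length_drop] at hi; omega⟩)
    (by simp [Fin.le_def])

lemma take_ge (L : List ℝ) (hL : L.Pairwise (· ≥ ·)) (k : ℕ) (hk : k < L.length) :
    ∀ a ∈ L.take (k + 1), L[k] ≤ a := by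
  intro a ha
  obtain ⟨i, hi, rfl⟩ := List.mem_iff_getElem.1 ha
  rw [List.getElem_take]
  have hi' : i ≤ k := by
    simp [List.length_take] at hi; omega
  exact hL.rel_get_of_le (a := ⟨i, by omega⟩) (b := ⟨k, hk⟩) (by simp [Fin.le_def, hi'])

lemma counts_of_get (L : List ℝ) (hL : L.Pairwise (· ≥ ·)) (k : ℕ) (hk : k < L.length) (x : ℝ)
    (h : L[k] = x) :
    k < L.countP (fun a => decide (x ≤ a)) ∧ L.countP (fun a => decide (x < a)) ≤ k := by
  have hsplit1 := List.take_append_drop (k + 1) L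
  have hsplit2 := List.take_append_drop k L
  constructor
  · have h1 : (L.take (k + 1)).countP (fun a => decide (x ≤ a)) = k + 1 := by
      rw [List.countP_eq_length.2, List.length_take]
      · omega
      · intro a ha
        simpa using h ▸ take_ge L hL k hk a ha
    calc k < (L.take (k+1)).countP (fun a => decide (x ≤ a)) := by omega
    _ ≤ L.countP (fun a => decide (x ≤ a)) := by
        conv_rhs => rw [← hsplit1]
        rw [List.countP_append]; omega
  · have h2 : (L.drop k).countP (fun a => decide (x < a)) = 0 := by
      rw [List.countP_eq_zero]
      intro a ha
      have := h ▸ drop_le L hL k hk a ha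
      simpa using not_lt.2 this
    have h3 : (L.take k).countP (fun a => decide (x < a)) ≤ k := by
      calc _ ≤ (L.take k).length := List.countP_le_length
      _ ≤ k := by simp [List.length_take]
    conv_lhs => rw [← hsplit2]
    rw [List.countP_append]; omega

lemma get_of_counts (L : List ℝ) (hL : L.Pairwise (· ≥ ·)) (k : ℕ) (hk : k < L.length) (x : ℝ)
    (h1 : k < L.countP (fun a => decide (x ≤ a)))
    (h2 : L.countP (fun a => decide (x < a)) ≤ k) :
    L[k] = x := by
  by_contra hne
  rcases lt_or_gt_of_ne hne with hlt | hgt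
  · -- L[k] < x : count of (x ≤ ·) is ≤ k
    have hd : (L.drop k).countP (fun a => decide (x ≤ a)) = 0 := by
      rw [List.countP_eq_zero]
      intro a ha
      have := drop_le L hL k hk a ha
      simpa using not_le.2 (lt_of_le_of_lt this hlt)
    have ht : (L.take k).countP (fun a => decide (x ≤ a)) ≤ k := by
      calc _ ≤ (L.take k).length := List.countP_le_length
      _ ≤ k := by simp [List.length_take]
    have := List.take_append_drop k L
    rw [← this, List.countP_append] at h1; omega
  · -- x < L[k] : count of (x < ·) is ≥ k+1
    have ht : (L.take (k+1)).countP (fun a => decide (x < a)) = k + 1 := by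
      rw [List.countP_eq_length.2, List.length_take]
      · omega
      · intro a ha
        have := take_ge L hL k hk a ha
        simpa using lt_of_lt_of_le hgt this
    have := List.take_append_drop (k+1) L
    rw [← this, List.countP_append] at h2; omega


theorem krank_fixed_point (M k : ℕ) (hM : 1 ≤ M) (hk1 : 1 ≤ k) (hkM : k ≤ M)
    (α : ℝ) (hα : α < 1)
    (f : Fin M → ℝ → ℝ)
    (hcon : ∀ i (x y : ℝ), |f i x - f i y| ≤ α * |x - y|)
    (r : Fin M → ℝ) (hr : ∀ i, f i (r i) = r i) :
    krank M k (fun i => f i (krank M k r)) = krank M k r := by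
  have hα0 : 0 ≤ α := by
    have h := hcon ⟨0, hM⟩ 0 1
    have h0 : (0:ℝ) ≤ |f ⟨0, hM⟩ 0 - f ⟨0, hM⟩ 1| := abs_nonneg _
    simp at h; linarith
  set x := krank M k r with hx
  set g : Fin M → ℝ := fun i => f i x with hg
  -- pointwise comparisons
  have hup : ∀ i : Fin M, x ≤ r i → x ≤ g i := by
    intro i hi
    have h := hcon i x (r i)
    rw [hr i] at h
    have h2 : |x - r i| = r i - x := by rw [abs_sub_comm]; exact abs_of_nonneg (by linarith)
    rw [h2] at h
    have h3 := abs_le.1 h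
    simp only [hg]
    nlinarith [h3.1]
  have hdown : ∀ i : Fin M, r i ≤ x → g i ≤ x := by
    intro i hi
    have h := hcon i x (r i)
    rw [hr i] at h
    have h2 : |x - r i| = x - r i := abs_of_nonneg (by linarith)
    rw [h2] at h
    have h3 := abs_le.1 h
    simp only [hg]
    nlinarith [h3.2]
  -- sorted lists
  set L : List ℝ := (List.ofFn r).insertionSort (· ≥ ·) with hL
  set L' : List ℝ := (List.ofFn g).insertionSort (· ≥ ·) with hL'
  have hLs : L.Pairwise (· ≥ ·) := List.pairwise_insertionSort _ _
  have hL's : L'.Pairwise (· ≥ ·) := List.pairwise_insertionSort _ _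
  have hLlen : L.length = M := by
    rw [(List.perm_insertionSort _ _).length_eq, List.length_ofFn]
  have hL'len : L'.length = M := by
    rw [(List.perm_insertionSort _ _).length_eq, List.length_ofFn]
  have hkm : k - 1 < L.length := by omega
  have hkm' : k - 1 < L'.length := by omega
  have hxL : L[k-1] = x := by
    rw [hx]
    unfold krank
    rw [List.getD_eq_getElem _ _ hkm]
  -- counts for r
  have hcounts := counts_of_get L hLs (k-1) hkm x hxL
  have hperm := (List.perm_insertionSort (· ≥ ·) (List.ofFn r))
  have hperm' := (List.perm_insertionSort (· ≥ ·) (List.ofFn g))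
  -- transfer counts to L'
  have hc1 : k - 1 < L'.countP (fun a => decide (x ≤ a)) := by
    calc k - 1 < L.countP (fun a => decide (x ≤ a)) := hcounts.1
    _ = (List.ofFn r).countP (fun a => decide (x ≤ a)) := hperm.countP_eq _
    _ ≤ (List.ofFn g).countP (fun a => decide (x ≤ a)) := by
        rw [List.ofFn_eq_map, List.ofFn_eq_map, List.countP_map, List.countP_map]
        apply List.countP_mono_left
        intro i _ hi
        simp only [Function.comp, decide_eq_true_eq] at hi ⊢
        exact hup i hi
    _ = L'.countP (fun a => decide (x ≤ a)) := (hperm'.countP_eq _).symm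
  have hc2 : L'.countP (fun a => decide (x < a)) ≤ k - 1 := by
    calc L'.countP (fun a => decide (x < a))
        = (List.ofFn g).countP (fun a => decide (x < a)) := hperm'.countP_eq _
    _ ≤ (List.ofFn r).countP (fun a => decide (x < a)) := by
        rw [List.ofFn_eq_map, List.ofFn_eq_map, List.countP_map, List.countP_map]
        apply List.countP_mono_left
        intro i _ hi
        simp only [Function.comp, decide_eq_true_eq] at hi ⊢
        by_contra hcon'
        exact absurd (hdown i (le_of_not_gt hcon')) (not_le.2 hi)
    _ = L.countP (fun a => decide (x < a)) := (hperm.countP_eq _).symm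
    _ ≤ k - 1 := hcounts.2
  have := get_of_counts L' hL's (k-1) hkm' x hc1 hc2
  show krank M k g = x
  unfold krank
  rw [List.getD_eq_getElem _ _ hkm']
  exact this
end

section
/- Consider the period-two forced max-type recurrence x_{2i} = max{f₁(x_{2i-1}), f₂(x_{2i-2})}, x_{2i+1} = max{g₁(x_{2i}), g₂(x_{2i-1})} with contractions f₁, f₂, g₁, g₂. Let r₁, r₂, r₃, r₄ satisfy f₁(g₁(r₁)) = r₁, g₁(f₁(r₂)) = r₂ (with f₁(r₂) = r₁, g₁(r₁) = r₂), f₂(r₃) = r₃, g₂(r₄) = r₄. Then the sequence defined by x_{2i} = max{f₁(max{r₂,r₄}), r₃} and x_{2i+1} = max{g₁(max{r₁,r₃}), r₄} for all i is a period-two solution of the recurrence. -/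
private lemma key_max (f g f₂ : ℝ → ℝ) (α : ℝ) (hα : α < 1) (hα0 : 0 ≤ α)
    (hf : ∀ x y, |f x - f y| ≤ α * |x - y|)
    (hg : ∀ x y, |g x - g y| ≤ α * |x - y|)
    (hf₂ : ∀ x y, |f₂ x - f₂ y| ≤ α * |x - y|)
    (r₁ r₂ r₃ r₄ : ℝ)
    (h1 : f r₂ = r₁) (h2 : g r₁ = r₂) (h3 : f₂ r₃ = r₃) :
    max (f (max (g (max r₁ r₃)) r₄)) (f₂ (max (f (max r₂ r₄)) r₃))
      = max (f (max r₂ r₄)) r₃ := by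
  set M : ℝ := max r₂ r₄ with hM
  set N : ℝ := max r₁ r₃ with hN
  set P : ℝ := max (f M) r₃ with hP
  set Q : ℝ := max (g N) r₄ with hQ
  have hPr₃ : r₃ ≤ P := le_max_right _ _
  have hF1 : f₂ P ≤ P := by
    have h := hf₂ P r₃
    rw [h3] at h
    have habs : |P - r₃| = P - r₃ := abs_of_nonneg (by linarith)
    rw [habs] at h
    have h' : f₂ P - r₃ ≤ α * (P - r₃) := le_trans (le_abs_self _) h
    nlinarith
  have hmain : max (f M) (f₂ P) = P := by
    rcases le_total r₃ (f M) with h | h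
    · have hPfM : P = f M := max_eq_left h
      rw [hPfM]
      exact max_eq_left (hPfM ▸ hF1)
    · have hPr : P = r₃ := max_eq_right h
      rw [hPr, h3]
      exact max_eq_right h
  rcases le_or_gt r₃ r₁ with hc | hc
  · -- Case I : N = r₁, Q = M
    have hNr : N = r₁ := max_eq_left hc
    have hQM : Q = M := by rw [hQ, hNr, h2, hM]
    rw [hQM]
    exact hmain
  · -- Case II : N = r₃
    have hNr : N = r₃ := max_eq_right hc.le
    have hgr : |g r₃ - r₂| ≤ α * (r₃ - r₁) := by
      have h := hg r₃ r₁
      rw [h2, abs_of_nonneg (by linarith : (0:ℝ) ≤ r₃ - r₁)] at h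
      exact h
    have hgr' : g r₃ - r₂ ≤ α * (r₃ - r₁) := le_trans (le_abs_self _) hgr
    have hgr'' : r₂ - g r₃ ≤ α * (r₃ - r₁) := by
      have := (abs_le.mp hgr).1
      linarith
    have hfg : f (g r₃) ≤ r₃ := by
      have h := hf (g r₃) r₂
      rw [h1] at h
      have h' : f (g r₃) - r₁ ≤ α * |g r₃ - r₂| := le_trans (le_abs_self _) h
      have h'' : α * |g r₃ - r₂| ≤ α * (α * (r₃ - r₁)) :=
        mul_le_mul_of_nonneg_left hgr hα0
      nlinarith
    rcases le_or_gt r₄ r₂ with hd | hd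
    · -- M = r₂, f M = r₁ < r₃, P = r₃
      have hMr : M = r₂ := max_eq_left hd
      have hfM : f M = r₁ := by rw [hMr, h1]
      have hPr : P = r₃ := max_eq_right (by rw [hfM]; linarith)
      have hfQ : f Q ≤ r₃ := by
        rcases le_or_gt (g r₃) r₄ with he | he
        · -- Q = r₄
          have hQr : Q = r₄ := by rw [hQ, hNr]; exact max_eq_right he
          have h := hf r₄ r₂
          rw [h1] at h
          have h' : f r₄ - r₁ ≤ α * |r₄ - r₂| := le_trans (le_abs_self _) h
          have habs : |r₄ - r₂| = r₂ - r₄ := by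
            rw [abs_sub_comm]; exact abs_of_nonneg (by linarith)
          rw [habs] at h'
          have h24 : r₂ - r₄ ≤ α * (r₃ - r₁) := by linarith
          rw [hQr]
          nlinarith
        · -- Q = g r₃
          have hQr : Q = g r₃ := by rw [hQ, hNr]; exact max_eq_left he.le
          rw [hQr]; exact hfg
      rw [hPr, h3]
      exact max_eq_right hfQ
    · -- M = r₄
      have hMr : M = r₄ := max_eq_right hd.le
      rcases le_or_gt (g r₃) r₄ with he | he
      · -- Q = r₄ = M
        have hQM : Q = M := by rw [hQ, hNr, hMr]; exact max_eq_right he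
        rw [hQM]; exact hmain
      · -- Q = g r₃, and f M = f r₄ ≤ r₃ so P = r₃
        have hQr : Q = g r₃ := by rw [hQ, hNr]; exact max_eq_left he.le
        have h42 : r₄ - r₂ ≤ α * (r₃ - r₁) := by linarith
        have hfM : f M ≤ r₃ := by
          have h := hf r₄ r₂
          rw [h1] at h
          have h' : f r₄ - r₁ ≤ α * |r₄ - r₂| := le_trans (le_abs_self _) h
          have habs : |r₄ - r₂| = r₄ - r₂ := abs_of_nonneg (by linarith)
          rw [habs] at h'
          rw [hMr]
          nlinarith
        have hPr : P = r₃ := max_eq_right hfM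
        rw [hPr, h3, hQr]
        exact max_eq_right hfg

theorem period_two_max_solution (f₁ f₂ g₁ g₂ : ℝ → ℝ) (α : ℝ) (hα : α < 1)
    (hf₁ : ∀ x y, |f₁ x - f₁ y| ≤ α * |x - y|)
    (hf₂ : ∀ x y, |f₂ x - f₂ y| ≤ α * |x - y|)
    (hg₁ : ∀ x y, |g₁ x - g₁ y| ≤ α * |x - y|)
    (hg₂ : ∀ x y, |g₂ x - g₂ y| ≤ α * |x - y|)
    (r₁ r₂ r₃ r₄ : ℝ)
    (h1 : f₁ r₂ = r₁) (h2 : g₁ r₁ = r₂) (h3 : f₂ r₃ = r₃) (h4 : g₂ r₄ = r₄)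
    (x : ℕ → ℝ)
    (hx : ∀ i : ℕ, x (2 * i) = max (f₁ (max r₂ r₄)) r₃ ∧
                   x (2 * i + 1) = max (g₁ (max r₁ r₃)) r₄) :
    ∀ i : ℕ, 1 ≤ i →
      x (2 * i) = max (f₁ (x (2 * i - 1))) (f₂ (x (2 * i - 2))) ∧
      x (2 * i + 1) = max (g₁ (x (2 * i))) (g₂ (x (2 * i - 1))) := by
  have hα0 : 0 ≤ α := by
    have h := hf₁ 0 1
    have h0 : (0:ℝ) ≤ |f₁ 0 - f₁ 1| := abs_nonneg _
    simp at h
    linarith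
  intro i hi
  obtain ⟨he, ho⟩ := hx i
  obtain ⟨he', ho'⟩ := hx (i - 1)
  have e1 : 2 * i - 1 = 2 * (i - 1) + 1 := by omega
  have e2 : 2 * i - 2 = 2 * (i - 1) := by omega
  rw [e1, e2, he, ho, he', ho']
  constructor
  · exact (key_max f₁ g₁ f₂ α hα hα0 hf₁ hg₁ hf₂ r₁ r₂ r₃ r₄ h1 h2 h3).symm
  · have := key_max g₁ f₁ g₂ α hα hα0 hg₁ hf₁ hg₂ r₂ r₁ r₄ r₃ h2 h1 h4
    rw [max_comm r₂ r₄, max_comm r₁ r₃] at this ⊢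
    exact this.symm
end
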